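/- For any connected graph G_m of order m ≥ 2 with edge set E(G_m), and complete graph K_n with n ≥ 2, max{rvc(G_m), n+1} ≤ rvcl(G_m ⋄ K_n) ≤ m + n + |E(G_m)| − 1. -/

import Mathlib

open SimpleGraph

/-- A walk is a rainbow vertex path: it is a path and its internal vertices
receive pairwise distinct colors. -/
def IsRainbowPath {V : Type*} (G : SimpleGraph V) {k : ℕ} (c : V → Fin k)
    {u v : V} (p : G.Walk u v) : Prop :=
  p.IsPath ∧ (p.support.tail.dropLast.map c).Nodup

/-- A rainbow vertex coloring: every two vertices are joined by a rainbow vertex path. -/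
def IsRVColoring {V : Type*} (G : SimpleGraph V) {k : ℕ} (c : V → Fin k) : Prop :=
  ∀ u v : V, ∃ p : G.Walk u v, IsRainbowPath G c p

/-- The rainbow vertex connection number. -/
noncomputable def rvc {V : Type*} (G : SimpleGraph V) : ℕ :=
  sInf {k | ∃ c : V → Fin k, IsRVColoring G c}

/-- The rainbow code of a vertex: its vector of distances to the color classes. -/
noncomputable def rainbowCode {V : Type*} (G : SimpleGraph V) {k : ℕ}
    (c : V → Fin k) (v : V) : Fin k → ℕ :=
  fun i => sInf {d | ∃ w, c w = i ∧ G.dist v w = d}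

/-- A locating rainbow coloring: a rainbow vertex coloring whose rainbow codes
are pairwise distinct. -/
def IsLocatingRVColoring {V : Type*} (G : SimpleGraph V) {k : ℕ} (c : V → Fin k) : Prop :=
  IsRVColoring G c ∧ Function.Injective (rainbowCode G c)

/-- The locating rainbow connection number. -/
noncomputable def rvcl {V : Type*} (G : SimpleGraph V) : ℕ :=
  sInf {k | ∃ c : V → Fin k, IsLocatingRVColoring G c}

/-- The edge corona `G ⋄ H`: one copy of `G` together with one copy of `H`
for each edge of `G`, where both endpoints of the edge are joined to
every vertex of the corresponding copy of `H`. -/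
def edgeCorona {V W : Type*} (G : SimpleGraph V) (H : SimpleGraph W) :
    SimpleGraph (V ⊕ (G.edgeSet × W)) where
  Adj x y :=
    match x, y with
    | .inl u, .inl v => G.Adj u v
    | .inl u, .inr (e, _) => u ∈ (e : Sym2 V)
    | .inr (e, _), .inl u => u ∈ (e : Sym2 V)
    | .inr (e, w), .inr (e', w') => e = e' ∧ H.Adj w w'
  symm := by
    refine ⟨?_⟩
    rintro (u | ⟨e, w⟩) (v | ⟨e', w'⟩) h
    · exact h.symm
    · exact h
    · exact h
    · exact ⟨h.1.symm, h.2.symm⟩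
  loopless := by
    refine ⟨?_⟩
    rintro (u | ⟨e, w⟩) h
    · exact G.ne_of_adj h rfl
    · exact H.ne_of_adj h.2 rfl

/-- A cut vertex: a vertex whose removal disconnects the graph. -/
def IsCutVertex {V : Type*} (G : SimpleGraph V) (v : V) : Prop :=
  ¬ (G.induce {u | u ≠ v}).Connected

open List

section Lists

variable {α : Type*}

lemma tail_sublist_of_head? {S P : List α} (h : S <+ P) (hh : S.head? = P.head?) :
    S.tail <+ P.tail := by
  cases S with
  | nil => simp
  | cons a S' =>
    cases P with
    | nil => simp at hh
    | cons b P' =>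
      simp only [List.head?_cons, Option.some.injEq] at hh
      subst hh
      exact List.cons_sublist_cons.mp h

lemma dropLast_sublist_of_getLast? {S P : List α} (h : S <+ P) (hh : S.getLast? = P.getLast?) :
    S.dropLast <+ P.dropLast := by
  have h2 : S.reverse.tail <+ P.reverse.tail :=
    tail_sublist_of_head? (List.reverse_sublist.mpr h) (by simpa using hh)
  rw [List.tail_reverse, List.tail_reverse] at h2
  exact List.reverse_sublist.mp h2

lemma internal_sublist {S P : List α} (h : S <+ P) (hh : S.head? = P.head?)
    (hl : S.getLast? = P.getLast?) (hS : S.length ≠ 1) (hP : P.length ≠ 1) :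
    S.tail.dropLast <+ P.tail.dropLast := by
  refine dropLast_sublist_of_getLast? (tail_sublist_of_head? h hh) ?_
  rw [List.getLast?_tail, List.getLast?_tail, if_neg hS, if_neg hP]
  exact hl

end Lists

section Code

variable {V : Type*} {G : SimpleGraph V} {k : ℕ}

lemma code_le (c : V → Fin k) {i : Fin k} {z : V} (hz : c z = i) (y : V) :
    rainbowCode G c y i ≤ G.dist y z :=
  Nat.sInf_le ⟨z, hz, rfl⟩

lemma code_self (c : V → Fin k) (x : V) : rainbowCode G c x (c x) = 0 :=
  Nat.le_zero.mp (by simpa [SimpleGraph.dist_self] using code_le (G := G) c (i := c x) (z := x) rfl x)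

lemma code_eq_zero_iff (hp : G.Preconnected) (c : V → Fin k) {i : Fin k}
    (hi : ∃ z, c z = i) (y : V) : rainbowCode G c y i = 0 ↔ c y = i := by
  constructor
  · intro h
    obtain ⟨z, hz⟩ := hi
    have hne : {d | ∃ w, c w = i ∧ G.dist y w = d}.Nonempty := ⟨_, z, hz, rfl⟩
    have h0 := Nat.sInf_mem hne
    rw [show sInf {d | ∃ w, c w = i ∧ G.dist y w = d} = rainbowCode G c y i from rfl, h] at h0
    obtain ⟨w, hw, hd⟩ := h0
    rwa [(hp y w).dist_eq_zero_iff.mp hd]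
  · rintro rfl
    exact code_self c y
lemma code_singleton (c : V → Fin k) {i : Fin k} {z : V}
    (hz : ∀ w, c w = i ↔ w = z) (y : V) : rainbowCode G c y i = G.dist y z := by
  have : {d | ∃ w, c w = i ∧ G.dist y w = d} = {G.dist y z} := by
    ext d
    constructor
    · rintro ⟨w, hw, rfl⟩
      rw [(hz w).mp hw]; rfl
    · rintro rfl
      exact ⟨z, (hz z).mpr rfl, rfl⟩
  rw [rainbowCode]
  simp only [this, csInf_singleton]

end Code

section Walks

lemma Walk.getLast?_support {V : Type*} {G : SimpleGraph V} {u v : V} (p : G.Walk u v) :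
    p.support.getLast? = some v := by
  rw [List.getLast?_eq_head?_reverse, ← SimpleGraph.Walk.support_reverse,
    p.reverse.support_eq_cons]
  rfl

end Walks

section Corona

variable {V W : Type*} {G : SimpleGraph V} {H : SimpleGraph W}

lemma adj_of_mem_edge {e : Sym2 V} (he : e ∈ G.edgeSet) {u a : V} (hu : u ∈ e) (ha : a ∈ e)
    (hne : u ≠ a) : G.Adj u a := by
  induction e with
  | _ x y =>
    rw [Sym2.mem_iff] at hu ha
    rcases hu with rfl | rfl <;> rcases ha with rfl | rfl
    · exact absurd rfl hne
    · exact he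
    · exact he.symm
    · exact absurd rfl hne

/-- Embedding of `G` into the edge corona. -/
def coronaHom (G : SimpleGraph V) (H : SimpleGraph W) : G →g edgeCorona G H :=
  ⟨Sum.inl, fun h => h⟩

@[simp] lemma coronaHom_apply (u : V) : coronaHom G H u = Sum.inl u := rfl

lemma edgeCorona_project {v : V} :
    ∀ {x y : V ⊕ (G.edgeSet × W)} (p : (edgeCorona G H).Walk x y), y = Sum.inl v →
      (∀ u : V, x = Sum.inl u → ∃ q : G.Walk u v, q.support.map Sum.inl <+ p.support) ∧
      (∀ (e : G.edgeSet) (w : W), x = Sum.inr (e, w) →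
        ∃ a, a ∈ (e : Sym2 V) ∧ ∃ q : G.Walk a v, q.support.map Sum.inl <+ p.support.tail) := by
  intro x y p
  induction p with
  | nil =>
    rintro rfl
    constructor
    · rintro u hu
      obtain rfl : v = u := Sum.inl.inj hu
      exact ⟨SimpleGraph.Walk.nil, by simp⟩
    · rintro e w hx
      exact absurd hx (by simp)
  | @cons x b y h p ih =>
    intro hy
    obtain ⟨ih1, ih2⟩ := ih hy
    constructor
    · rintro u rfl
      cases b with
      | inl u' =>
        obtain ⟨q', hq'⟩ := ih1 u' rfl
        exact ⟨SimpleGraph.Walk.cons h q', List.cons_sublist_cons.mpr hq'⟩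
      | inr ew =>
        obtain ⟨e, w⟩ := ew
        obtain ⟨a, ha, q', hq'⟩ := ih2 e w rfl
        by_cases hau : a = u
        · subst hau
          exact ⟨q', (hq'.trans (List.tail_sublist _)).trans (List.sublist_cons_self _ _)⟩
        · have hadj : G.Adj u a := adj_of_mem_edge e.2 h ha (Ne.symm hau)
          exact ⟨SimpleGraph.Walk.cons hadj q',
            List.cons_sublist_cons.mpr (hq'.trans (List.tail_sublist _))⟩
    · rintro e w rfl
      cases b with
      | inl u' =>
        obtain ⟨q', hq'⟩ := ih1 u' rfl
        exact ⟨u', h, q', hq'⟩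
      | inr ew =>
        obtain ⟨e', w'⟩ := ew
        obtain ⟨a, ha, q', hq'⟩ := ih2 e' w' rfl
        exact ⟨a, h.1 ▸ ha, q', hq'.trans (List.tail_sublist _)⟩

end Corona
open List

section Restrict

variable {V W : Type*} {G : SimpleGraph V} {H : SimpleGraph W}

lemma isRVColoring_restrict {k : ℕ} (c : (V ⊕ (G.edgeSet × W)) → Fin k)
    (hc : IsRVColoring (edgeCorona G H) c) :
    IsRVColoring G (fun v => c (Sum.inl v)) := by
  intro u v
  by_cases huv : u = v
  · subst huv
    exact ⟨SimpleGraph.Walk.nil, SimpleGraph.Walk.IsPath.nil, by simp⟩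
  · obtain ⟨p, hp, hcol⟩ := hc (Sum.inl u) (Sum.inl v)
    obtain ⟨q, hq⟩ := (edgeCorona_project p rfl).1 u rfl
    have hpn : p.support.Nodup := hp.support_nodup
    have hqn : q.support.Nodup := ((hq.nodup hpn).of_map _)
    refine ⟨q, (SimpleGraph.Walk.isPath_def _).mpr hqn, ?_⟩
    have hS : (q.support.map Sum.inl).tail.dropLast <+ p.support.tail.dropLast := by
      refine internal_sublist hq ?_ ?_ ?_ ?_
      · rw [List.head?_map, q.support_eq_cons, p.support_eq_cons]
        rfl
      · rw [List.getLast?_map, Walk.getLast?_support, Walk.getLast?_support]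
        rfl
      · rw [List.length_map, SimpleGraph.Walk.length_support]
        intro hlen
        exact huv (q.eq_of_length_eq_zero (Nat.succ_injective hlen))
      · rw [SimpleGraph.Walk.length_support]
        intro hlen
        exact huv (Sum.inl.inj (p.eq_of_length_eq_zero (Nat.succ_injective hlen)))
    have hEq : q.support.tail.dropLast.map (fun v => c (Sum.inl v)) =
        ((q.support.map Sum.inl).tail.dropLast.map c) := by
      rw [← List.map_tail, ← List.map_dropLast, List.map_map]
      rfl
    rw [hEq]
    exact (hS.map c).nodup hcol

lemma rvc_le_of_corona {k : ℕ} (c : (V ⊕ (G.edgeSet × W)) → Fin k)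
    (hc : IsLocatingRVColoring (edgeCorona G H) c) : rvc G ≤ k :=
  Nat.sInf_le ⟨_, isRVColoring_restrict c hc.1⟩

end Restrict
section Swap

variable {U : Type*} [DecidableEq U] {G' : SimpleGraph U}

lemma swap_adj_aux {x y : U} (hxy : G'.Adj x y)
    (htwin : ∀ z, z ≠ x → z ≠ y → (G'.Adj z x ↔ G'.Adj z y)) {a b : U} (hab : G'.Adj a b) :
    G'.Adj (Equiv.swap x y a) (Equiv.swap x y b) := by
  rcases eq_or_ne a x with rfl | hax
  · rw [Equiv.swap_apply_left]
    rcases eq_or_ne b a with rfl | hbx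
    · exact absurd hab (G'.loopless.irrefl _)
    · rcases eq_or_ne b y with rfl | hby
      · rw [Equiv.swap_apply_right]; exact hxy.symm
      · rw [Equiv.swap_apply_of_ne_of_ne hbx hby]
        exact ((htwin b hbx hby).mp hab.symm).symm
  · rcases eq_or_ne a y with rfl | hay
    · rw [Equiv.swap_apply_right]
      rcases eq_or_ne b x with rfl | hbx
      · rw [Equiv.swap_apply_left]; exact hxy
      · rcases eq_or_ne b a with rfl | hby
        · exact absurd hab (G'.loopless.irrefl _)
        · rw [Equiv.swap_apply_of_ne_of_ne hbx hby]
          exact ((htwin b hbx hby).mpr hab.symm).symm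
    · rw [Equiv.swap_apply_of_ne_of_ne hax hay]
      rcases eq_or_ne b x with rfl | hbx
      · rw [Equiv.swap_apply_left]; exact (htwin a hax hay).mp hab
      · rcases eq_or_ne b y with rfl | hby
        · rw [Equiv.swap_apply_right]; exact (htwin a hax hay).mpr hab
        · rw [Equiv.swap_apply_of_ne_of_ne hbx hby]; exact hab

/-- The swap of two adjacent twin vertices is a graph automorphism. -/
def swapIso {x y : U} (hxy : G'.Adj x y)
    (htwin : ∀ z, z ≠ x → z ≠ y → (G'.Adj z x ↔ G'.Adj z y)) : G' ≃g G' where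
  toEquiv := Equiv.swap x y
  map_rel_iff' := by
    intro a b
    constructor
    · intro h
      have h2 := swap_adj_aux hxy htwin h
      simpa [Equiv.swap_apply_self] using h2
    · exact swap_adj_aux hxy htwin

lemma iso_dist_eq (φ : G' ≃g G') (u v : U) : G'.dist (φ u) (φ v) = G'.dist u v := by
  have key : ∀ (ψ : G' ≃g G') (a b : U), G'.dist (ψ a) (ψ b) ≤ G'.dist a b := by
    intro ψ a b
    by_cases h : G'.Reachable a b
    · obtain ⟨p, hp⟩ := h.exists_walk_length_eq_dist
      calc G'.dist (ψ a) (ψ b) ≤ (p.map ψ.toHom).length := SimpleGraph.dist_le _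
        _ = p.length := p.length_map _
        _ = _ := hp
    · rw [SimpleGraph.dist_eq_zero_of_not_reachable h,
        SimpleGraph.dist_eq_zero_of_not_reachable]
      · intro hr
        exact h (by simpa using hr.map ψ.symm.toHom)
  refine le_antisymm (key φ u v) ?_
  have h2 := key φ.symm (φ u) (φ v)
  simpa using h2

lemma code_iso {k : ℕ} (c : U → Fin k) (φ : G' ≃g G')
    (hc : ∀ z, c (φ z) = c z) (x : U) :
    rainbowCode G' c (φ x) = rainbowCode G' c x := by
  funext i
  show sInf _ = sInf _
  congr 1
  ext d
  constructor
  · rintro ⟨w, hw, rfl⟩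
    refine ⟨φ.symm w, ?_, ?_⟩
    · rw [← hc (φ.symm w), φ.apply_symm_apply]
      exact hw
    · rw [← iso_dist_eq φ x (φ.symm w), φ.apply_symm_apply]
  · rintro ⟨w, hw, rfl⟩
    exact ⟨φ w, (hc w).trans hw, iso_dist_eq φ x w⟩

end Swap

section LowerN

variable {V : Type*} {G : SimpleGraph V} {n : ℕ} [DecidableEq V]

lemma copy_injective {k : ℕ} (c : (V ⊕ (G.edgeSet × Fin n)) → Fin k)
    (hc : IsLocatingRVColoring (edgeCorona G (⊤ : SimpleGraph (Fin n))) c) (e : G.edgeSet) :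
    Function.Injective (fun w : Fin n => c (Sum.inr (e, w))) := by
  intro w₁ w₂ hww
  by_contra hne
  have hxy : ((edgeCorona G (⊤ : SimpleGraph (Fin n)))).Adj (Sum.inr (e, w₁)) (Sum.inr (e, w₂)) := ⟨rfl, hne⟩
  have htwin : ∀ z, z ≠ Sum.inr (e, w₁) → z ≠ Sum.inr (e, w₂) →
      (((edgeCorona G (⊤ : SimpleGraph (Fin n)))).Adj z (Sum.inr (e, w₁)) ↔ ((edgeCorona G (⊤ : SimpleGraph (Fin n)))).Adj z (Sum.inr (e, w₂))) := by
    rintro (u | ⟨e', w'⟩) hz1 hz2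
    · exact Iff.rfl
    · show (e' = e ∧ w' ≠ w₁) ↔ (e' = e ∧ w' ≠ w₂)
      constructor
      · rintro ⟨rfl, -⟩
        exact ⟨rfl, fun h => hz2 (by rw [h])⟩
      · rintro ⟨rfl, -⟩
        exact ⟨rfl, fun h => hz1 (by rw [h])⟩
  set φ : (edgeCorona G (⊤ : SimpleGraph (Fin n))) ≃g (edgeCorona G (⊤ : SimpleGraph (Fin n))) := swapIso hxy htwin with hφ
  have hcφ : ∀ z, c (φ z) = c z := by
    intro z
    rcases eq_or_ne z (Sum.inr (e, w₁)) with rfl | h1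
    · rw [show φ (Sum.inr (e, w₁)) = Sum.inr (e, w₂) from Equiv.swap_apply_left _ _]
      exact hww.symm
    · rcases eq_or_ne z (Sum.inr (e, w₂)) with rfl | h2
      · rw [show φ (Sum.inr (e, w₂)) = Sum.inr (e, w₁) from Equiv.swap_apply_right _ _]
        exact hww
      · rw [show φ z = z from Equiv.swap_apply_of_ne_of_ne h1 h2]
  have hcode := code_iso c φ hcφ (Sum.inr (e, w₁))
  rw [show φ (Sum.inr (e, w₁)) = Sum.inr (e, w₂) from Equiv.swap_apply_left _ _] at hcode
  have := hc.2 hcode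
  simp only [Sum.inr.injEq, Prod.mk.injEq] at this
  exact hne this.2.symm

lemma lower_n {k : ℕ} (hconn : ((edgeCorona G (⊤ : SimpleGraph (Fin n)))).Connected) (c : (V ⊕ (G.edgeSet × Fin n)) → Fin k)
    (hc : IsLocatingRVColoring (edgeCorona G (⊤ : SimpleGraph (Fin n))) c) (e : G.edgeSet) (u : V) (hu : u ∈ (e : Sym2 V)) :
    n + 1 ≤ k := by
  have hinj := copy_injective c hc e
  have hnk : n ≤ k := by
    simpa using Fintype.card_le_of_injective _ hinj
  by_contra hlt
  have hk : k = n := le_antisymm (by omega) hnk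
  have hbij : Function.Bijective (fun w : Fin n => c (Sum.inr (e, w))) :=
    (Fintype.bijective_iff_injective_and_card _).mpr ⟨hinj, by simpa using hk.symm⟩
  obtain ⟨w, hw⟩ := hbij.2 (c (Sum.inl u))
  have hcode : rainbowCode (edgeCorona G (⊤ : SimpleGraph (Fin n))) c (Sum.inl u) = rainbowCode (edgeCorona G (⊤ : SimpleGraph (Fin n))) c (Sum.inr (e, w)) := by
    funext i
    rcases eq_or_ne i (c (Sum.inl u)) with rfl | hi
    · rw [code_self, ← hw, code_self]
    · obtain ⟨wi, hwi⟩ := hbij.2 i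
      have hz : ∃ z, c z = i := ⟨_, hwi⟩
      have hne1 : rainbowCode (edgeCorona G (⊤ : SimpleGraph (Fin n))) c (Sum.inl u) i ≠ 0 := by
        simp only [ne_eq, code_eq_zero_iff hconn.preconnected c hz]
        exact fun hh => hi hh.symm
      have hle1 : rainbowCode (edgeCorona G (⊤ : SimpleGraph (Fin n))) c (Sum.inl u) i ≤ 1 := by
        refine (code_le c hwi _).trans ?_
        exact le_of_eq (SimpleGraph.dist_eq_one_iff_adj.mpr hu)
      have hwwi : wi ≠ w := by
        intro hh
        subst hh
        exact hi ((hw ▸ hwi).symm)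
      have hne2 : rainbowCode (edgeCorona G (⊤ : SimpleGraph (Fin n))) c (Sum.inr (e, w)) i ≠ 0 := by
        simp only [ne_eq, code_eq_zero_iff hconn.preconnected c hz]
        intro hh
        exact hi (hh ▸ hw ▸ rfl)
      have hle2 : rainbowCode (edgeCorona G (⊤ : SimpleGraph (Fin n))) c (Sum.inr (e, w)) i ≤ 1 := by
        refine (code_le c hwi _).trans ?_
        refine le_of_eq (SimpleGraph.dist_eq_one_iff_adj.mpr ?_)
        exact ⟨rfl, hwwi.symm⟩
      omega
  have := hc.2 hcode
  exact absurd this (by simp)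

end LowerN
section ReverseRainbow

variable {α : Type*}

lemma tail_dropLast_comm (l : List α) : l.tail.dropLast = l.dropLast.tail := by
  cases l with
  | nil => rfl
  | cons a l =>
    cases l with
    | nil => rfl
    | cons b l => simp [List.dropLast_cons₂]

lemma dropLast_reverse' (l : List α) : l.reverse.dropLast = l.tail.reverse := by
  have h : l.reverse.reverse.tail = l.reverse.dropLast.reverse := List.tail_reverse
  rw [List.reverse_reverse] at h
  rw [← List.reverse_reverse (l.reverse.dropLast), ← h]

lemma internal_reverse (l : List α) : l.reverse.tail.dropLast = (l.tail.dropLast).reverse := by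
  rw [List.tail_reverse, dropLast_reverse', tail_dropLast_comm]

lemma IsRainbowPath.reverse {V : Type*} {G : SimpleGraph V} {k : ℕ} {c : V → Fin k} {u v : V}
    {p : G.Walk u v} (h : IsRainbowPath G c p) : IsRainbowPath G c p.reverse := by
  refine ⟨h.1.reverse, ?_⟩
  rw [SimpleGraph.Walk.support_reverse, internal_reverse, List.map_reverse]
  exact List.nodup_reverse.mpr h.2

lemma internal_nodup {α β : Type*} (c : α → β) {l : List α} (h : (l.map c).Nodup) :
    (l.tail.dropLast.map c).Nodup :=
  (List.Sublist.map c ((List.dropLast_sublist _).trans (List.tail_sublist _))).nodup h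

end ReverseRainbow

section Construction

variable {V : Type*} [Fintype V] [DecidableEq V] (G : SimpleGraph V) [DecidableRel G.Adj]
  (n : ℕ)

/-- The locating rainbow coloring of the edge corona used for the upper bound. -/
noncomputable def cCol (hn : 2 ≤ n) :
    (V ⊕ (G.edgeSet × Fin n)) → Fin (Fintype.card V + n + Fintype.card G.edgeSet - 1) :=
  fun x =>
    match x with
    | Sum.inl u => ⟨(Fintype.equivFin V u : ℕ), by
        have := (Fintype.equivFin V u).isLt; omega⟩
    | Sum.inr (e, w) =>
      if h : (w : ℕ) = n - 1 then
        ⟨Fintype.card V + (n - 1) + (Fintype.equivFin G.edgeSet e : ℕ), by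
          have := (Fintype.equivFin G.edgeSet e).isLt; omega⟩
      else
        ⟨Fintype.card V + (w : ℕ), by
          have h1 := w.isLt
          have h2 : (0:ℕ) ≤ Fintype.card G.edgeSet := Nat.zero_le _
          omega⟩

variable {G n}

lemma cCol_inl (hn : 2 ≤ n) (u : V) :
    ((cCol G n hn (Sum.inl u)) : ℕ) = (Fintype.equivFin V u : ℕ) := rfl

lemma cCol_last (hn : 2 ≤ n) (e : G.edgeSet) {w : Fin n} (hw : (w : ℕ) = n - 1) :
    ((cCol G n hn (Sum.inr (e, w))) : ℕ) =
      Fintype.card V + (n - 1) + (Fintype.equivFin G.edgeSet e : ℕ) := by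
  simp [cCol, hw]

lemma cCol_mid (hn : 2 ≤ n) (e : G.edgeSet) {w : Fin n} (hw : (w : ℕ) ≠ n - 1) :
    ((cCol G n hn (Sum.inr (e, w))) : ℕ) = Fintype.card V + (w : ℕ) := by
  simp [cCol, hw]

lemma cCol_inl_injective (hn : 2 ≤ n) :
    Function.Injective (fun u : V => cCol G n hn (Sum.inl u)) := by
  intro u u' h
  have h2 := congrArg Fin.val h
  rw [cCol_inl hn u, cCol_inl hn u'] at h2
  exact (Fintype.equivFin V).injective (Fin.val_injective h2)

lemma class_inl (hn : 2 ≤ n) (u : V) :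
    ∀ z, cCol G n hn z = cCol G n hn (Sum.inl u) ↔ z = Sum.inl u := by
  rintro (u' | ⟨e, w⟩)
  · constructor
    · intro h
      exact congrArg Sum.inl (cCol_inl_injective hn h)
    · intro h
      rw [Sum.inl.inj h]
  · constructor
    · intro h
      exfalso
      have hval := congrArg Fin.val h
      rw [cCol_inl hn u] at hval
      have hu := (Fintype.equivFin V u).isLt
      by_cases hw : (w : ℕ) = n - 1
      · rw [cCol_last hn e hw] at hval; omega
      · rw [cCol_mid hn e hw] at hval; omega
    · intro h; exact absurd h (by simp)

/-- The distinguished last vertex of a copy. -/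
def lastVert (hn : 2 ≤ n) (e : G.edgeSet) : V ⊕ (G.edgeSet × Fin n) :=
  Sum.inr (e, ⟨n - 1, by omega⟩)

lemma class_last (hn : 2 ≤ n) (e : G.edgeSet) :
    ∀ z, cCol G n hn z = cCol G n hn (lastVert hn e) ↔ z = lastVert hn e := by
  have hlv : ((⟨n - 1, by omega⟩ : Fin n) : ℕ) = n - 1 := rfl
  rintro (u' | ⟨e', w'⟩)
  · constructor
    · intro h
      exfalso
      have hval := congrArg Fin.val h
      rw [cCol_inl hn u', lastVert, cCol_last hn e hlv] at hval
      have hu := (Fintype.equivFin V u').isLt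
      omega
    · intro h; exact absurd h (by simp [lastVert])
  · rw [lastVert]
    constructor
    · intro h
      have hval := congrArg Fin.val h
      rw [cCol_last hn e hlv] at hval
      by_cases hw : (w' : ℕ) = n - 1
      · rw [cCol_last hn e' hw] at hval
        have he : e' = e := (Fintype.equivFin G.edgeSet).injective (Fin.val_injective (by omega))
        subst he
        have : w' = (⟨n - 1, by omega⟩ : Fin n) := Fin.ext hw
        rw [this]
      · exfalso
        rw [cCol_mid hn e' hw] at hval
        have h1 := w'.isLt
        have h2 : (0:ℕ) ≤ (Fintype.equivFin G.edgeSet e : ℕ) := Nat.zero_le _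
        omega
    · rintro h
      obtain ⟨rfl, rfl⟩ : e' = e ∧ w' = ⟨n - 1, by omega⟩ := by
        simpa [Prod.ext_iff] using h
      rfl

end Construction
section RVConstruction

variable {V W : Type*} {G : SimpleGraph V} {H : SimpleGraph W}

lemma corona_walk_to_copy {u a : V} (q : G.Walk u a) (hq : q.IsPath) (e : G.edgeSet)
    (ha : a ∈ (e : Sym2 V)) (w : W) :
    ∃ p : (edgeCorona G H).Walk (Sum.inl u) (Sum.inr (e, w)),
      p.IsPath ∧ p.support = q.support.map Sum.inl ++ [Sum.inr (e, w)] := by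
  have hadj : (edgeCorona G H).Adj (coronaHom G H a) (Sum.inr (e, w)) := ha
  refine ⟨((q.map (coronaHom G H)).concat hadj).copy (coronaHom_apply (G := G) (H := H) u) rfl, ?_, ?_⟩
  case refine_2 =>
    rw [SimpleGraph.Walk.support_copy, SimpleGraph.Walk.support_concat, SimpleGraph.Walk.support_map]
    rfl
  case refine_1 =>
    rw [SimpleGraph.Walk.isPath_copy, SimpleGraph.Walk.isPath_def, SimpleGraph.Walk.support_concat,
      SimpleGraph.Walk.support_map]
    refine List.Nodup.append ?_ (by simp) ?_
    · exact hq.support_nodup.map Sum.inl_injective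
    · intro x hx hy
      simp only [List.mem_singleton] at hy
      subst hy
      obtain ⟨b, -, hb⟩ := List.mem_map.mp hx
      exact absurd hb (by simp)

end RVConstruction

section Construction2

variable {V : Type*} [Fintype V] [DecidableEq V] {G : SimpleGraph V} [DecidableRel G.Adj]
  {n : ℕ}

lemma cCol_isRV (hn : 2 ≤ n) (hG : G.Connected) :
    IsRVColoring (edgeCorona G (⊤ : SimpleGraph (Fin n))) (cCol G n hn) := by
  have hpath : ∀ a b : V, ∃ q : G.Walk a b, q.IsPath := by
    intro a b
    obtain ⟨p⟩ := hG.preconnected a b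
    exact ⟨p.toPath.1, p.toPath.2⟩
  have hinl : ∀ (l : List V), l.Nodup → ((l.map Sum.inl).map (cCol G n hn)).Nodup := by
    intro l hl
    rw [List.map_map]
    exact List.Nodup.map (cCol_inl_injective hn) hl
  have hmix : ∀ (u : V) (e : G.edgeSet) (w : Fin n),
      ∃ p : (edgeCorona G (⊤ : SimpleGraph (Fin n))).Walk (Sum.inl u) (Sum.inr (e, w)),
        IsRainbowPath _ (cCol G n hn) p := by
    intro u e w
    obtain ⟨a, ha⟩ : ∃ a, a ∈ (e : Sym2 V) := ⟨(e : Sym2 V).out.1, Sym2.out_fst_mem _⟩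
    obtain ⟨q, hq⟩ := hpath u a
    obtain ⟨p, hp, hs⟩ := corona_walk_to_copy q hq e ha w
    refine ⟨p, hp, ?_⟩
    rw [hs, q.support_eq_cons, List.map_cons, List.cons_append, List.tail_cons,
      List.dropLast_concat]
    exact ((((List.tail_sublist q.support).map Sum.inl).map (cCol G n hn)).nodup
      (hinl q.support hq.support_nodup))
  rintro (u | ⟨e, w⟩) (v | ⟨e', w'⟩)
  · obtain ⟨q, hq⟩ := hpath u v
    refine ⟨(q.map (coronaHom G _)).copy (coronaHom_apply u) (coronaHom_apply v), (SimpleGraph.Walk.isPath_copy _ _ _).mpr (SimpleGraph.Walk.map_isPath_of_injective Sum.inl_injective hq), ?_⟩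
    rw [SimpleGraph.Walk.support_copy, SimpleGraph.Walk.support_map]
    exact internal_nodup _ (hinl q.support hq.support_nodup)
  · exact hmix u e' w'
  · obtain ⟨p, hp⟩ := hmix v e w
    exact ⟨p.reverse, hp.reverse⟩
  · by_cases hee : e = e'
    · subst hee
      by_cases hww : w = w'
      · subst hww
        exact ⟨SimpleGraph.Walk.nil, SimpleGraph.Walk.IsPath.nil, by simp⟩
      · refine ⟨SimpleGraph.Walk.cons (show (edgeCorona G (⊤ : SimpleGraph (Fin n))).Adj
          (Sum.inr (e, w)) (Sum.inr (e, w')) from ⟨rfl, hww⟩) SimpleGraph.Walk.nil, ?_, by simp⟩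
        rw [SimpleGraph.Walk.isPath_def]
        simp [hww]
    · obtain ⟨a, ha⟩ : ∃ a, a ∈ (e : Sym2 V) := ⟨(e : Sym2 V).out.1, Sym2.out_fst_mem _⟩
      obtain ⟨b, hb⟩ : ∃ b, b ∈ (e' : Sym2 V) := ⟨(e' : Sym2 V).out.1, Sym2.out_fst_mem _⟩
      obtain ⟨q, hq⟩ := hpath a b
      obtain ⟨p1, hp1, hs1⟩ := corona_walk_to_copy q hq e' hb w'
      have hadj : (edgeCorona G (⊤ : SimpleGraph (Fin n))).Adj (Sum.inr (e, w)) (Sum.inl a) := ha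
      refine ⟨SimpleGraph.Walk.cons hadj p1, ?_, ?_⟩
      · rw [SimpleGraph.Walk.isPath_def, SimpleGraph.Walk.support_cons, hs1, List.nodup_cons]
        refine ⟨?_, hs1 ▸ hp1.support_nodup⟩
        intro hmem
        rcases List.mem_append.mp hmem with hmem | hmem
        · obtain ⟨b', -, hb'⟩ := List.mem_map.mp hmem
          exact absurd hb' (by simp)
        · simp only [List.mem_singleton, Sum.inr.injEq, Prod.mk.injEq] at hmem
          exact hee hmem.1
      · rw [SimpleGraph.Walk.support_cons, hs1, List.tail_cons, List.dropLast_concat]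
        exact hinl q.support hq.support_nodup

lemma cCol_codes_injective (hn : 2 ≤ n)
    (hpre : (edgeCorona G (⊤ : SimpleGraph (Fin n))).Preconnected) :
    Function.Injective (rainbowCode (edgeCorona G (⊤ : SimpleGraph (Fin n))) (cCol G n hn)) := by
  intro x y h
  by_contra hxy
  have hcc : cCol G n hn y = cCol G n hn x := by
    have h0 : rainbowCode (edgeCorona G (⊤ : SimpleGraph (Fin n))) (cCol G n hn) y (cCol G n hn x) = 0 := by
      rw [← congrFun h (cCol G n hn x)]
      exact code_self (cCol G n hn) x
    exact (code_eq_zero_iff hpre (cCol G n hn) ⟨x, rfl⟩ y).mp h0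
  match x, y, h, hxy, hcc with
  | Sum.inl u, y, h, hxy, hcc =>
    exact hxy ((class_inl hn u y).mp hcc).symm
  | Sum.inr (e, w), Sum.inl u, h, hxy, hcc =>
    exact hxy ((class_inl hn u _).mp hcc.symm)
  | Sum.inr (e, w), Sum.inr (e', w'), h, hxy, hcc =>
    by_cases hw : (w : ℕ) = n - 1
    · have hx : Sum.inr (e, w) = lastVert hn e := by
        rw [lastVert]
        exact congrArg _ (congrArg _ (Fin.ext hw))
      rw [hx] at hcc
      exact hxy (hx.trans ((class_last hn e _).mp hcc).symm)
    · by_cases hw' : (w' : ℕ) = n - 1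
      · have hy : Sum.inr (e', w') = lastVert hn e' := by
          rw [lastVert]
          exact congrArg _ (congrArg _ (Fin.ext hw'))
        rw [hy] at hcc
        exact hxy (((class_last hn e' _).mp hcc.symm).trans hy.symm)
      · have hval := congrArg Fin.val hcc
        rw [cCol_mid hn e hw, cCol_mid hn e' hw'] at hval
        obtain rfl : w = w' := Fin.ext (by omega)
        have hee : e ≠ e' := by
          intro hh
          exact hxy (by rw [hh])
        have hcode := congrFun h (cCol G n hn (lastVert hn e))
        rw [code_singleton _ (class_last hn e), code_singleton _ (class_last hn e)] at hcode
        have h1 : (edgeCorona G (⊤ : SimpleGraph (Fin n))).dist (Sum.inr (e, w)) (lastVert hn e)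
            = 1 := by
          rw [SimpleGraph.dist_eq_one_iff_adj]
          exact ⟨rfl, fun hh => hw (congrArg Fin.val hh)⟩
        rw [h1] at hcode
        have h2 := SimpleGraph.dist_eq_one_iff_adj.mp hcode.symm
        exact hee h2.1.symm

end Construction2
theorem stmt6 {V : Type*} [Fintype V] [DecidableEq V] (G : SimpleGraph V)
    [DecidableRel G.Adj] (n : ℕ)
    (hG : G.Connected) (hm : 2 ≤ Fintype.card V) (hn : 2 ≤ n) :
    max (rvc G) (n + 1) ≤ rvcl (edgeCorona G (⊤ : SimpleGraph (Fin n))) ∧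
      rvcl (edgeCorona G (⊤ : SimpleGraph (Fin n))) ≤ Fintype.card V + n + G.edgeFinset.card - 1 := by
  obtain ⟨u0, v0, hne0⟩ := Fintype.exists_pair_of_one_lt_card (by omega : 1 < Fintype.card V)
  have hedge : ∃ u v : V, G.Adj u v := by
    obtain ⟨p⟩ := hG.preconnected u0 v0
    cases p with
    | nil => exact absurd rfl hne0
    | cons h _ => exact ⟨_, _, h⟩
  obtain ⟨u, v, huv⟩ := hedge
  have hu : u ∈ ((⟨s(u, v), huv⟩ : G.edgeSet) : Sym2 V) := Sym2.mem_mk_left u v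
  have hRV := cCol_isRV (G := G) hn hG
  have hpre : (edgeCorona G (⊤ : SimpleGraph (Fin n))).Preconnected := by
    intro x y
    obtain ⟨p, -⟩ := hRV x y
    exact ⟨p⟩
  have hconn : (edgeCorona G (⊤ : SimpleGraph (Fin n))).Connected := by
    rw [SimpleGraph.connected_iff]
    exact ⟨hpre, ⟨Sum.inl u⟩⟩
  have hloc : IsLocatingRVColoring (edgeCorona G (⊤ : SimpleGraph (Fin n))) (cCol G n hn) :=
    ⟨hRV, cCol_codes_injective hn hpre⟩
  have hmem : (Fintype.card V + n + Fintype.card G.edgeSet - 1) ∈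
      {k | ∃ c : (V ⊕ (G.edgeSet × Fin n)) → Fin k,
        IsLocatingRVColoring (edgeCorona G (⊤ : SimpleGraph (Fin n))) c} := ⟨_, hloc⟩
  constructor
  · have hsinf := Nat.sInf_mem (⟨_, hmem⟩ : Set.Nonempty _)
    obtain ⟨c, hc⟩ := hsinf
    exact max_le (rvc_le_of_corona c hc) (lower_n hconn c hc ⟨s(u, v), huv⟩ u hu)
  · have hle := Nat.sInf_le hmem
    rw [SimpleGraph.edgeFinset_card]
    exact hle
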